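/- For all real ν > 1/2, the function x ↦ K_{ν−1}(x)/K_ν(x) is strictly increasing on (0, ∞). -/

import Mathlib

open Real MeasureTheory Set Function

/-- Modified Bessel function of the first kind `I_ν(x)` (for `x > 0`),
defined by its standard power series. -/
noncomputable def besselI (ν x : ℝ) : ℝ :=
  ∑' k : ℕ, (x / 2) ^ (2 * k) / ((Nat.factorial k : ℝ) * Real.Gamma (k + ν + 1)) * (x / 2) ^ ν

/-- Modified Bessel function of the second kind `K_ν(x)` (for `x > 0`),
defined by its standard integral representation. -/
noncomputable def besselK (ν x : ℝ) : ℝ :=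
  ∫ t in Set.Ioi (0 : ℝ), Real.exp (-x * Real.cosh t) * Real.cosh (ν * t)

namespace BesselKAux

/-- The integrand of `besselK`. -/
noncomputable def ker (a u : ℝ) (t : ℝ) : ℝ :=
  Real.exp (-u * Real.cosh t) * Real.cosh (a * t)

lemma besselK_eq (a u : ℝ) :
    besselK a u = ∫ t, ker a u t ∂(volume.restrict (Set.Ioi (0 : ℝ))) := rfl

lemma ker_pos (a u t : ℝ) : 0 < ker a u t :=
  mul_pos (Real.exp_pos _) (Real.cosh_pos _)

lemma cosh_quad_le {t : ℝ} (ht : 0 ≤ t) : (1 + t / 2) ^ 2 / 2 ≤ Real.cosh t := by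
  have h1 : t / 2 + 1 ≤ Real.exp (t / 2) := Real.add_one_le_exp _
  have h2 : Real.exp (t / 2) * Real.exp (t / 2) = Real.exp t := by
    rw [← Real.exp_add]; congr 1; ring
  have h3 := Real.exp_pos (-t)
  have h4 := Real.cosh_eq t
  nlinarith [Real.exp_pos (t / 2)]

lemma cosh_le_exp_abs (u : ℝ) : Real.cosh u ≤ Real.exp |u| := by
  have e1 : Real.exp u ≤ Real.exp |u| := Real.exp_le_exp.2 (le_abs_self u)
  have e2 : Real.exp (-u) ≤ Real.exp |u| := Real.exp_le_exp.2 (neg_le_abs u)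
  rw [Real.cosh_eq]; linarith

lemma ker_integrableOn (a : ℝ) {u : ℝ} (hu : 0 < u) :
    IntegrableOn (ker a u) (Set.Ioi (0 : ℝ)) := by
  have hcont : Continuous (ker a u) := by
    unfold ker
    exact (Real.continuous_exp.comp (continuous_const.mul Real.continuous_cosh)).mul
      (Real.continuous_cosh.comp (continuous_const.mul continuous_id))
  have hm : AEStronglyMeasurable (ker a u) (volume.restrict (Set.Ioi (0:ℝ))) :=
    hcont.aestronglyMeasurable.restrict
  set C : ℝ := 2 * (|a| + 1) ^ 2 / u with hC
  have hg : Integrable (fun t : ℝ => Real.exp C * Real.exp (-1 * t))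
      (volume.restrict (Set.Ioi (0:ℝ))) :=
    (exp_neg_integrableOn_Ioi 0 one_pos).const_mul _
  refine Integrable.mono hg hm ?_
  filter_upwards [ae_restrict_mem measurableSet_Ioi] with t ht
  rw [Set.mem_Ioi] at ht
  have hb1 : Real.cosh (a * t) ≤ Real.exp (|a| * t) := by
    calc Real.cosh (a * t) ≤ Real.exp |a * t| := cosh_le_exp_abs _
    _ = Real.exp (|a| * t) := by rw [abs_mul, abs_of_pos ht]
  have hq := cosh_quad_le ht.le
  have hb2 : |a| * t - u * Real.cosh t ≤ C - t := by
    have key : (|a| * t + t - u * Real.cosh t) * u ≤ 2 * (|a| + 1) ^ 2 := by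
      have h5 : u * u * ((1 + t / 2) ^ 2 / 2) ≤ u * u * Real.cosh t :=
        mul_le_mul_of_nonneg_left hq (by positivity)
      nlinarith [sq_nonneg (u * t - 4 * (|a| + 1)), abs_nonneg a]
    have h6 : |a| * t + t - u * Real.cosh t ≤ 2 * (|a| + 1) ^ 2 / u :=
      (le_div_iff₀ hu).2 key
    rw [hC]; linarith
  have hker : 0 < ker a u t := ker_pos a u t
  rw [Real.norm_eq_abs, Real.norm_eq_abs, abs_of_pos hker,
    abs_of_pos (by positivity : (0:ℝ) < Real.exp C * Real.exp (-1 * t))]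
  calc ker a u t = Real.exp (-u * Real.cosh t) * Real.cosh (a * t) := rfl
    _ ≤ Real.exp (-u * Real.cosh t) * Real.exp (|a| * t) :=
        mul_le_mul_of_nonneg_left hb1 (Real.exp_pos _).le
    _ = Real.exp (|a| * t - u * Real.cosh t) := by rw [← Real.exp_add]; congr 1; ring
    _ ≤ Real.exp (C - t) := Real.exp_le_exp.2 hb2
    _ = Real.exp C * Real.exp (-1 * t) := by rw [← Real.exp_add]; congr 1; ring

lemma besselK_pos (a : ℝ) {u : ℝ} (hu : 0 < u) : 0 < besselK a u := by
  rw [besselK_eq]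
  rw [integral_pos_iff_support_of_nonneg_ae
    (Filter.Eventually.of_forall fun t => (ker_pos a u t).le) (ker_integrableOn a hu)]
  have hsupp : support (ker a u) = Set.univ := by
    ext t; simp [Function.mem_support, (ker_pos a u t).ne']
  rw [hsupp]
  simp [Measure.restrict_apply, Real.volume_Ioi]

lemma cosh_mul_lt {ν s t : ℝ} (hν : 1 / 2 < ν) (ht : 0 < t) (hst : t < s) :
    Real.cosh ((ν - 1) * s) * Real.cosh (ν * t) <
      Real.cosh (ν * s) * Real.cosh ((ν - 1) * t) := by
  have hs : 0 < s := ht.trans hst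
  have key : ∀ X Y : ℝ, 2 * (Real.cosh X * Real.cosh Y) = Real.cosh (X + Y) + Real.cosh (X - Y) := by
    intro X Y; rw [Real.cosh_add, Real.cosh_sub]; ring
  have hprod : (0:ℝ) < (2 * ν - 1) * ((s + t) * (s - t)) := by
    apply mul_pos (by linarith)
    apply mul_pos (by linarith) (by linarith)
  have h1 : Real.cosh ((ν - 1) * s + ν * t) < Real.cosh (ν * s + (ν - 1) * t) := by
    rw [Real.cosh_lt_cosh, ← sq_lt_sq]
    nlinarith [hprod]
  have h2 : Real.cosh ((ν - 1) * s - ν * t) < Real.cosh (ν * s - (ν - 1) * t) := by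
    rw [Real.cosh_lt_cosh, ← sq_lt_sq]
    nlinarith [hprod]
  have k1 := key ((ν - 1) * s) (ν * t)
  have k2 := key (ν * s) ((ν - 1) * t)
  linarith

lemma W_pos {ν x y s t : ℝ} (hν : 1 / 2 < ν) (hx : 0 < x) (hxy : x < y)
    (ht : 0 < t) (hst : t < s) :
    0 < ker (ν - 1) y s * ker ν x t - ker (ν - 1) x s * ker ν y t +
        (ker ν x s * ker (ν - 1) y t - ker ν y s * ker (ν - 1) x t) := by
  have hs : 0 < s := ht.trans hst
  have hcosh : Real.cosh t < Real.cosh s :=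
    Real.cosh_lt_cosh.2 (by rw [abs_of_pos ht, abs_of_pos hs]; exact hst)
  have hAB : Real.exp (-x * Real.cosh t) * Real.exp (-y * Real.cosh s) <
      Real.exp (-x * Real.cosh s) * Real.exp (-y * Real.cosh t) := by
    rw [← Real.exp_add, ← Real.exp_add]
    apply Real.exp_lt_exp.2
    nlinarith
  have hbr := cosh_mul_lt hν ht hst
  have key : 0 < (Real.exp (-x * Real.cosh s) * Real.exp (-y * Real.cosh t) -
        Real.exp (-x * Real.cosh t) * Real.exp (-y * Real.cosh s)) *
      (Real.cosh (ν * s) * Real.cosh ((ν - 1) * t) -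
        Real.cosh ((ν - 1) * s) * Real.cosh (ν * t)) :=
    mul_pos (by linarith) (by linarith)
  have expand : ker (ν - 1) y s * ker ν x t - ker (ν - 1) x s * ker ν y t +
        (ker ν x s * ker (ν - 1) y t - ker ν y s * ker (ν - 1) x t) =
      (Real.exp (-x * Real.cosh s) * Real.exp (-y * Real.cosh t) -
        Real.exp (-x * Real.cosh t) * Real.exp (-y * Real.cosh s)) *
      (Real.cosh (ν * s) * Real.cosh ((ν - 1) * t) -
        Real.cosh ((ν - 1) * s) * Real.cosh (ν * t)) := by
    unfold ker; ring
  linarith [key, expand]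

lemma W_pos' {ν x y s t : ℝ} (hν : 1 / 2 < ν) (hx : 0 < x) (hxy : x < y)
    (hs : 0 < s) (ht : 0 < t) (hst : s ≠ t) :
    0 < ker (ν - 1) y s * ker ν x t - ker (ν - 1) x s * ker ν y t +
        (ker ν x s * ker (ν - 1) y t - ker ν y s * ker (ν - 1) x t) := by
  rcases hst.lt_or_gt with h | h
  · have h1 := W_pos hν hx hxy hs h
    have h2 : ker (ν - 1) y t * ker ν x s - ker (ν - 1) x t * ker ν y s +
          (ker ν x t * ker (ν - 1) y s - ker ν y t * ker (ν - 1) x s) =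
        ker (ν - 1) y s * ker ν x t - ker (ν - 1) x s * ker ν y t +
          (ker ν x s * ker (ν - 1) y t - ker ν y s * ker (ν - 1) x t) := by
      unfold ker; ring
    linarith
  · exact W_pos hν hx hxy ht h

lemma W_nonneg {ν x y s t : ℝ} (hν : 1 / 2 < ν) (hx : 0 < x) (hxy : x < y)
    (hs : 0 < s) (ht : 0 < t) :
    0 ≤ ker (ν - 1) y s * ker ν x t - ker (ν - 1) x s * ker ν y t +
        (ker ν x s * ker (ν - 1) y t - ker ν y s * ker (ν - 1) x t) := by
  rcases eq_or_ne s t with rfl | h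
  · have : ker (ν - 1) y s * ker ν x s - ker (ν - 1) x s * ker ν y s +
        (ker ν x s * ker (ν - 1) y s - ker ν y s * ker (ν - 1) x s) = 0 := by
      unfold ker; ring
    linarith
  · exact (W_pos' hν hx hxy hs ht h).le

end BesselKAux

open BesselKAux in
theorem besselK_ratio_strictMonoOn (ν : ℝ) (hν : 1 / 2 < ν) :
    StrictMonoOn (fun x : ℝ => besselK (ν - 1) x / besselK ν x) (Set.Ioi 0) := by
  intro x hx y hy hxy
  simp only [Set.mem_Ioi] at hx hy
  have hKx : 0 < besselK ν x := besselK_pos ν hx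
  have hKy : 0 < besselK ν y := besselK_pos ν hy
  simp only
  rw [div_lt_div_iff₀ hKx hKy]
  -- goal : besselK (ν - 1) x * besselK ν y < besselK (ν - 1) y * besselK ν x
  have hf1 : Integrable (ker (ν - 1) x) (volume.restrict (Set.Ioi (0:ℝ))) :=
    ker_integrableOn _ hx
  have hf2 : Integrable (ker (ν - 1) y) (volume.restrict (Set.Ioi (0:ℝ))) :=
    ker_integrableOn _ hy
  have hg1 : Integrable (ker ν x) (volume.restrict (Set.Ioi (0:ℝ))) :=
    ker_integrableOn _ hx
  have hg2 : Integrable (ker ν y) (volume.restrict (Set.Ioi (0:ℝ))) :=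
    ker_integrableOn _ hy
  set M := (volume.restrict (Set.Ioi (0:ℝ))).prod (volume.restrict (Set.Ioi (0:ℝ))) with hM
  have hI1 : Integrable (fun z : ℝ × ℝ => ker (ν - 1) y z.1 * ker ν x z.2) M :=
    hf2.mul_prod hg1
  have hI2 : Integrable (fun z : ℝ × ℝ => ker (ν - 1) x z.1 * ker ν y z.2) M :=
    hf1.mul_prod hg2
  have hI3 : Integrable (fun z : ℝ × ℝ => ker ν x z.1 * ker (ν - 1) y z.2) M :=
    hg1.mul_prod hf2
  have hI4 : Integrable (fun z : ℝ × ℝ => ker ν y z.1 * ker (ν - 1) x z.2) M :=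
    hg2.mul_prod hf1
  set W : ℝ × ℝ → ℝ := fun z =>
    ker (ν - 1) y z.1 * ker ν x z.2 - ker (ν - 1) x z.1 * ker ν y z.2 +
      (ker ν x z.1 * ker (ν - 1) y z.2 - ker ν y z.1 * ker (ν - 1) x z.2) with hWdef
  have hWint : Integrable W M := (hI1.sub hI2).add (hI3.sub hI4)
  have hWval : ∫ z, W z ∂M =
      2 * (besselK (ν - 1) y * besselK ν x - besselK (ν - 1) x * besselK ν y) := by
    have h12 : Integrable (fun z : ℝ × ℝ =>
        ker (ν - 1) y z.1 * ker ν x z.2 - ker (ν - 1) x z.1 * ker ν y z.2) M := hI1.sub hI2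
    have h34 : Integrable (fun z : ℝ × ℝ =>
        ker ν x z.1 * ker (ν - 1) y z.2 - ker ν y z.1 * ker (ν - 1) x z.2) M := hI3.sub hI4
    have : ∫ z, W z ∂M =
        (∫ z, ker (ν - 1) y z.1 * ker ν x z.2 ∂M) -
          (∫ z, ker (ν - 1) x z.1 * ker ν y z.2 ∂M) +
        ((∫ z, ker ν x z.1 * ker (ν - 1) y z.2 ∂M) -
          (∫ z, ker ν y z.1 * ker (ν - 1) x z.2 ∂M)) := by
      rw [show (∫ z, W z ∂M) = ∫ z,
          (ker (ν - 1) y z.1 * ker ν x z.2 - ker (ν - 1) x z.1 * ker ν y z.2) +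
            (ker ν x z.1 * ker (ν - 1) y z.2 - ker ν y z.1 * ker (ν - 1) x z.2) ∂M from rfl,
        integral_add h12 h34, integral_sub hI1 hI2, integral_sub hI3 hI4]
    rw [this, hM, integral_prod_mul, integral_prod_mul, integral_prod_mul,
      integral_prod_mul, ← besselK_eq, ← besselK_eq, ← besselK_eq, ← besselK_eq]
    ring
  have hWpos : 0 < ∫ z, W z ∂M := by
    rw [integral_pos_iff_support_of_nonneg_ae ?_ hWint]
    · refine lt_of_lt_of_le ?_
        (measure_mono (?_ : Set.Ioo (1:ℝ) 2 ×ˢ Set.Ioo (3:ℝ) 4 ⊆ support W))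
      · rw [hM, Measure.prod_prod, Measure.restrict_apply measurableSet_Ioo,
          Measure.restrict_apply measurableSet_Ioo]
        have e1 : Set.Ioo (1:ℝ) 2 ∩ Set.Ioi 0 = Set.Ioo 1 2 := by
          apply Set.inter_eq_left.2; intro z hz; exact lt_trans one_pos hz.1
        have e2 : Set.Ioo (3:ℝ) 4 ∩ Set.Ioi 0 = Set.Ioo 3 4 := by
          apply Set.inter_eq_left.2; intro z hz
          exact lt_trans (by norm_num) hz.1
        rw [e1, e2, Real.volume_Ioo, Real.volume_Ioo]
        rw [← ENNReal.ofReal_mul (by norm_num)]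
        apply ENNReal.ofReal_pos.2; norm_num
      · intro z hz
        have hz1 : (0:ℝ) < z.1 := lt_trans one_pos hz.1.1
        have hz2 : (0:ℝ) < z.2 := lt_trans (by norm_num) hz.2.1
        have hne : z.1 ≠ z.2 := by
          intro h
          have h12 := hz.1.2
          have h21 := hz.2.1
          rw [h] at h12; linarith
        exact (W_pos' hν hx hxy hz1 hz2 hne).ne'
    · rw [hM, Measure.prod_restrict]
      filter_upwards [ae_restrict_mem (measurableSet_Ioi.prod measurableSet_Ioi)] with z hz
      exact W_nonneg hν hx hxy hz.1 hz.2
  linarith [hWval ▸ hWpos]
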